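/- If a tile assembly system is such that every producible assembly has at most one frontier location and at most one tile type attachable at that location, then the set of producible assemblies is totally ordered by the subassembly relation. -/

import Mathlib

/-!
STATEMENT 4: If a tile assembly system is such that every producible assembly
has at most one frontier location and at most one tile type attachable at that
location, then the set of producible assemblies is totally ordered by the
subassembly relation.
-/

inductive Dir | N | E | S | W
deriving DecidableEq

instance : Fintype Dir :=
  ⟨{.N, .E, .S, .W}, by intro d; cases d <;> decide⟩

def Dir.opp : Dir → Dir
  | .N => .S | .S => .N | .E => .W | .W => .E

def Dir.vec : Dir → ℤ × ℤ
  | .N => (0, 1) | .S => (0, -1) | .E => (1, 0) | .W => (-1, 0)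

structure Glue where
  label : String
  strength : ℕ
deriving DecidableEq

abbrev Tile := Dir → Glue
abbrev Config := ℤ × ℤ → Option Tile

attribute [local instance] Classical.propDecidable

def boundSides (α : Config) (p : ℤ × ℤ) (t : Tile) : Finset Dir :=
  Finset.univ.filter (fun d =>
    (t d).strength ≠ 0 ∧ ∃ t', α (p + d.vec) = some t' ∧ t' d.opp = t d)

/-- Temperature-2 stable attachment of tile `t` at empty location `p`. -/
def Attaches (T : Set Tile) (α : Config) (p : ℤ × ℤ) (t : Tile) : Prop :=
  t ∈ T ∧ α p = none ∧ 2 ≤ ∑ d ∈ boundSides α p t, (t d).strength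

inductive Producible (T : Set Tile) (σ : Config) : Config → Prop
  | seed : Producible T σ σ
  | attach {α : Config} {p : ℤ × ℤ} {t : Tile} :
      Producible T σ α → Attaches T α p t →
      Producible T σ (Function.update α p (some t))

/-- The subassembly relation: `α ⊑ β` iff `dom α ⊆ dom β` and they agree on
`dom α`. -/
def Subassembly (α β : Config) : Prop :=
  ∀ p t, α p = some t → β p = some t


inductive ProdN (T : Set Tile) (σ : Config) : ℕ → Config → Prop
  | seed : ProdN T σ 0 σ
  | attach {n : ℕ} {α : Config} {p : ℤ × ℤ} {t : Tile} :
      ProdN T σ n α → Attaches T α p t →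
      ProdN T σ (n + 1) (Function.update α p (some t))

lemma prodN_of_prod {T : Set Tile} {σ α : Config} (h : Producible T σ α) :
    ∃ n, ProdN T σ n α := by
  induction h with
  | seed => exact ⟨0, ProdN.seed⟩
  | attach _ hatt ih => obtain ⟨n, hn⟩ := ih; exact ⟨n + 1, hn.attach hatt⟩

lemma prod_of_prodN {T : Set Tile} {σ α : Config} {n : ℕ} (h : ProdN T σ n α) :
    Producible T σ α := by
  induction h with
  | seed => exact Producible.seed
  | attach _ hatt ih => exact ih.attach hatt

lemma sub_trans {α β γ : Config} (h1 : Subassembly α β) (h2 : Subassembly β γ) :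
    Subassembly α γ := fun p t hp => h2 p t (h1 p t hp)

lemma sub_update {α : Config} {p : ℤ × ℤ} {t : Tile} (h : α p = none) :
    Subassembly α (Function.update α p (some t)) := by
  intro q s hq
  have hqp : q ≠ p := by rintro rfl; rw [h] at hq; cases hq
  rwa [Function.update_of_ne hqp]

lemma sub_antisymm {α β : Config} (h1 : Subassembly α β) (h2 : Subassembly β α) :
    α = β := by
  funext q
  cases hq : α q with
  | some t => exact (h1 q t hq).symm
  | none =>
    cases hq' : β q with
    | some s => rw [h2 q s hq'] at hq; cases hq
    | none => rfl

lemma seed_sub {T : Set Tile} {σ α : Config} {n : ℕ} (h : ProdN T σ n α) :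
    Subassembly σ α := by
  induction h with
  | seed => exact fun p t hp => hp
  | attach _ hatt ih => exact sub_trans ih (sub_update hatt.2.1)

lemma key_lemma (T : Set Tile) (σ : Config)
    (hdet : ∀ α, Producible T σ α → ∀ p t p' t',
      Attaches T α p t → Attaches T α p' t' → p = p' ∧ t = t') :
    ∀ N n m α β, n + m ≤ N → ProdN T σ n α → ProdN T σ m β →
      Subassembly α β ∨ Subassembly β α := by
  intro N
  induction N with
  | zero =>
    intro n m α β hle hα hβ
    obtain rfl : n = 0 := by omega
    cases hα
    exact Or.inl (seed_sub hβ)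
  | succ N ih =>
    intro n m α β hle hα hβ
    cases hα with
    | seed => exact Or.inl (seed_sub hβ)
    | @attach n₀ α₀ p t hα₀ hatt =>
      cases hβ with
      | seed => exact Or.inr (seed_sub (hα₀.attach hatt))
      | @attach m₀ β₀ q s hβ₀ hbtt =>
        have h1 := ih n₀ (m₀ + 1) α₀ _ (by omega) hα₀ (hβ₀.attach hbtt)
        have h2 := ih (n₀ + 1) m₀ _ β₀ (by omega) (hα₀.attach hatt) hβ₀
        have h3 := ih n₀ m₀ α₀ β₀ (by omega) hα₀ hβ₀
        have hsubα : Subassembly α₀ (Function.update α₀ p (some t)) :=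
          sub_update hatt.2.1
        have hsubβ : Subassembly β₀ (Function.update β₀ q (some s)) :=
          sub_update hbtt.2.1
        rcases h2 with h2 | h2
        · exact Or.inl (sub_trans h2 hsubβ)
        rcases h1 with h1 | h1
        swap
        · exact Or.inr (sub_trans h1 hsubα)
        rcases h3 with h3 | h3
        · -- α₀ ⊑ β₀
          cases hp : β₀ p with
          | none =>
            have hba : Subassembly β₀ α₀ := by
              intro q' s' hq'
              have hq'p : q' ≠ p := by
                rintro rfl; rw [hp] at hq'; cases hq'
              have := h2 q' s' hq'
              rwa [Function.update_of_ne hq'p] at this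
            have heq : α₀ = β₀ := sub_antisymm h3 hba
            subst heq
            obtain ⟨hpq, hts⟩ := hdet α₀ (prod_of_prodN hα₀) p t q s hatt hbtt
            subst hpq; subst hts
            exact Or.inl (fun p' t' h => h)
          | some u =>
            have hαp : Function.update α₀ p (some t) p = some u := h2 p u hp
            rw [Function.update_self] at hαp
            have hut : u = t := by injection hαp.symm
            subst hut
            refine Or.inl (sub_trans ?_ hsubβ)
            intro q' s' hq'
            by_cases hq'p : q' = p
            · subst hq'p
              rw [Function.update_self] at hq'
              rw [← hq']; exact hp
            · rw [Function.update_of_ne hq'p] at hq'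
              exact h3 q' s' hq'
        · -- β₀ ⊑ α₀
          cases hq : α₀ q with
          | none =>
            have hab : Subassembly α₀ β₀ := by
              intro q' s' hq'
              have hq'q : q' ≠ q := by
                rintro rfl; rw [hq] at hq'; cases hq'
              have := h1 q' s' hq'
              rwa [Function.update_of_ne hq'q] at this
            have heq : α₀ = β₀ := sub_antisymm hab h3
            subst heq
            obtain ⟨hpq, hts⟩ := hdet α₀ (prod_of_prodN hα₀) p t q s hatt hbtt
            subst hpq; subst hts
            exact Or.inl (fun p' t' h => h)
          | some u =>
            have hβq : Function.update β₀ q (some s) q = some u := h1 q u hq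
            rw [Function.update_self] at hβq
            have hus : u = s := by injection hβq.symm
            subst hus
            refine Or.inr (sub_trans ?_ hsubα)
            intro q' s' hq'
            by_cases hq'q : q' = q
            · subst hq'q
              rw [Function.update_self] at hq'
              rw [← hq']; exact hq
            · rw [Function.update_of_ne hq'q] at hq'
              exact h3 q' s' hq'

/-- If for every producible assembly at most one location admits a tile
attachment and at most one tile type can attach there, then any two producible
assemblies are comparable under the subassembly relation. -/
theorem deterministic_attachment_total_order
    (T : Set Tile) (σ : Config)
    (hdet : ∀ α, Producible T σ α → ∀ p t p' t',
      Attaches T α p t → Attaches T α p' t' → p = p' ∧ t = t') :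
    ∀ α β, Producible T σ α → Producible T σ β →
      Subassembly α β ∨ Subassembly β α := by
  intro α β hα hβ
  obtain ⟨n, hn⟩ := prodN_of_prod hα
  obtain ⟨m, hm⟩ := prodN_of_prod hβ
  exact key_lemma T σ hdet (n + m) n m α β le_rfl hn hm
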